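/- The function f_∞(w) = γ (1+w)^{-2 + m/(2σ²)} (1-w)^{-2 - m/(2σ²)} exp( -(1 - m w)/(σ²(1 - w²)) ), with σ > 0, m ∈ (-1,1), solves on (-1,1) the stationary Fokker-Planck equation (m - w) f_∞(w) = (σ²/2) d/dw [ (1-w²)² f_∞(w) ]. -/

import Mathlib

theorem stationary_solution_solves_FP
    (σ m γ : ℝ) (hσ : 0 < σ) (hm : m ∈ Set.Ioo (-1 : ℝ) 1) (hγ : 0 < γ)
    (f : ℝ → ℝ)
    (hf : ∀ w : ℝ, f w =
      γ * (1 + w) ^ (-2 + m / (2 * σ ^ 2)) * (1 - w) ^ (-2 - m / (2 * σ ^ 2)) *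
        Real.exp (-(1 - m * w) / (σ ^ 2 * (1 - w ^ 2)))) :
    ∀ w ∈ Set.Ioo (-1 : ℝ) 1,
      (m - w) * f w = σ ^ 2 / 2 * deriv (fun w => (1 - w ^ 2) ^ 2 * f w) w := by
  intro w hw
  obtain ⟨hw1, hw2⟩ := hw
  have h1 : (0:ℝ) < 1 + w := by linarith
  have h2 : (0:ℝ) < 1 - w := by linarith
  have hD : (0:ℝ) < 1 - w ^ 2 := by nlinarith
  have hσ2 : (0:ℝ) < σ ^ 2 := by positivity
  set c : ℝ := m / (2 * σ ^ 2) with hc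
  set F : ℝ → ℝ := fun x => c * Real.log (1 + x) - c * Real.log (1 - x) +
      (-(1 - m * x)) / (σ ^ 2 * (1 - x ^ 2)) with hF
  have key : ∀ x ∈ Set.Ioo (-1:ℝ) 1, (1 - x ^ 2) ^ 2 * f x = γ * Real.exp (F x) := by
    intro x hx
    have h1x : (0:ℝ) < 1 + x := by linarith [hx.1]
    have h2x : (0:ℝ) < 1 - x := by linarith [hx.2]
    rw [hf x]
    simp only [hF]
    rw [Real.rpow_def_of_pos h1x, Real.rpow_def_of_pos h2x]
    have hsplit : c * Real.log (1 + x) - c * Real.log (1 - x) +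
        (-(1 - m * x)) / (σ ^ 2 * (1 - x ^ 2)) =
        ((-2 + c) * Real.log (1 + x)) + (((-2 - c) * Real.log (1 - x)) +
          ((-(1 - m * x)) / (σ ^ 2 * (1 - x ^ 2)) +
            (Real.log (1 + x) + Real.log (1 + x) + (Real.log (1 - x) + Real.log (1 - x))))) := by
      ring
    rw [hsplit]
    rw [Real.exp_add, Real.exp_add, Real.exp_add, Real.exp_add, Real.exp_add, Real.exp_add,
      Real.exp_log h1x, Real.exp_log h2x]
    have : (1 - x ^ 2) = (1 + x) * (1 - x) := by ring
    rw [this]; ring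
  have hlog1 : HasDerivAt (fun x : ℝ => Real.log (1 + x)) (1 / (1 + w)) w := by
    have h : HasDerivAt (fun x : ℝ => 1 + x) 1 w := (hasDerivAt_id w).const_add 1
    simpa using h.log (ne_of_gt h1)
  have hlog2 : HasDerivAt (fun x : ℝ => Real.log (1 - x)) ((-1) / (1 - w)) w := by
    have h : HasDerivAt (fun x : ℝ => 1 - x) (-1) w := (hasDerivAt_id w).const_sub 1
    simpa using h.log (ne_of_gt h2)
  have hnum : HasDerivAt (fun x : ℝ => -(1 - m * x)) m w := by
    exact ((((hasDerivAt_id w).const_mul m).const_sub 1).neg).congr_deriv (by ring)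
  have hden : HasDerivAt (fun x : ℝ => σ ^ 2 * (1 - x ^ 2)) (σ ^ 2 * (-(2 * w))) w := by
    have h : HasDerivAt (fun x : ℝ => x ^ 2) (2 * w) w := by simpa using hasDerivAt_pow 2 w
    simpa using (h.const_sub 1).const_mul (σ ^ 2)
  have hdenne : σ ^ 2 * (1 - w ^ 2) ≠ 0 := by positivity
  have hu := hnum.div hden hdenne
  have hFd : HasDerivAt F (c * (1 / (1 + w)) - c * ((-1) / (1 - w)) +
      (m * (σ ^ 2 * (1 - w ^ 2)) - (-(1 - m * w)) * (σ ^ 2 * (-(2 * w)))) /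
        (σ ^ 2 * (1 - w ^ 2)) ^ 2) w :=
    ((hlog1.const_mul c).sub (hlog2.const_mul c)).add hu
  have hG : HasDerivAt (fun x => γ * Real.exp (F x)) (γ * (Real.exp (F w) *
      (c * (1 / (1 + w)) - c * ((-1) / (1 - w)) +
      (m * (σ ^ 2 * (1 - w ^ 2)) - (-(1 - m * w)) * (σ ^ 2 * (-(2 * w)))) /
        (σ ^ 2 * (1 - w ^ 2)) ^ 2))) w := by
    simpa [mul_comm, mul_assoc] using (hFd.exp).const_mul γ
  have heq : (fun x : ℝ => (1 - x ^ 2) ^ 2 * f x) =ᶠ[nhds w] fun x => γ * Real.exp (F x) := by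
    filter_upwards [isOpen_Ioo.mem_nhds (Set.mem_Ioo.mpr ⟨hw1, hw2⟩)] with x hx using key x hx
  have hG2 : HasDerivAt (fun x : ℝ => (1 - x ^ 2) ^ 2 * f x) (γ * (Real.exp (F w) *
      (c * (1 / (1 + w)) - c * ((-1) / (1 - w)) +
      (m * (σ ^ 2 * (1 - w ^ 2)) - (-(1 - m * w)) * (σ ^ 2 * (-(2 * w)))) /
        (σ ^ 2 * (1 - w ^ 2)) ^ 2))) w := hG.congr_of_eventuallyEq heq
  rw [hG2.deriv]
  have hfw : f w = γ * Real.exp (F w) / (1 - w ^ 2) ^ 2 := by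
    have := key w ⟨hw1, hw2⟩
    field_simp at this ⊢
    linarith [this]
  rw [hfw, hc]
  have hDne : (1 - w ^ 2) ≠ 0 := ne_of_gt hD
  have h1ne : (1 + w) ≠ 0 := ne_of_gt h1
  have h2ne : (1 - w) ≠ 0 := ne_of_gt h2
  have hσne : σ ≠ 0 := ne_of_gt hσ
  have hfac : (1 - w ^ 2) = (1 + w) * (1 - w) := by ring
  field_simp
  ring
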